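/- arXiv:2005.04818 — 2 statements merged into one kernel-verified Lean document; each statement's English description precedes it below -/
import Mathlib

section
/- Let S = (N, M₀) be a live H1S-WMG≤ system with incidence matrix I. For every T-vector Y ∈ ℕ^T and marking M with M₀ + I·Y = M, there exist a marking M' and a firing sequence σ feasible at M₀ leading to M' such that P(σ) ≥ Y componentwise, and the residue σ ⧵ Y is feasible at M and also leads to M'. Consequently (N, M) is live. -/
open Classical

structure PetriNet (P T : Type) where
  pre  : P → T → ℕ
  post : T → P → ℕ

namespace PetriNet

variable {P T : Type}

def enabled (N : PetriNet P T) (M : P → ℕ) (t : T) : Prop :=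
  ∀ p, N.pre p t ≤ M p

def fire (N : PetriNet P T) (M : P → ℕ) (t : T) : P → ℕ :=
  fun p => M p - N.pre p t + N.post t p

def feasible (N : PetriNet P T) : (P → ℕ) → List T → Prop
  | _, [] => True
  | M, t :: σ => N.enabled M t ∧ N.feasible (N.fire M t) σ

def fireSeq (N : PetriNet P T) : (P → ℕ) → List T → (P → ℕ)
  | M, [] => M
  | M, t :: σ => N.fireSeq (N.fire M t) σ

/-- `M'` is reachable from `M` by some feasible firing sequence. -/
def reach (N : PetriNet P T) (M M' : P → ℕ) : Prop :=
  ∃ σ : List T, N.feasible M σ ∧ N.fireSeq M σ = M'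

/-- Liveness: from every reachable marking, every transition can eventually be enabled. -/
def live (N : PetriNet P T) (M0 : P → ℕ) : Prop :=
  ∀ M, N.reach M0 M → ∀ t, ∃ M', N.reach M M' ∧ N.enabled M' t

def incidence (N : PetriNet P T) (p : P) (t : T) : ℤ :=
  (N.post t p : ℤ) - (N.pre p t : ℤ)

/-- Potential reachability: the state equation `M = M0 + I·Y` has a solution `Y ∈ ℕ^T`. -/
def potReach [Fintype T] (N : PetriNet P T) (M0 M : P → ℕ) : Prop :=
  ∃ Y : T → ℕ, ∀ p, (M p : ℤ) = (M0 p : ℤ) + ∑ t, N.incidence p t * (Y t : ℤ)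

/-- A siphon: a nonempty set of places whose set of input transitions is
included in its set of output transitions. -/
def siphon (N : PetriNet P T) (D : Set P) : Prop :=
  D.Nonempty ∧ ∀ t, (∃ p ∈ D, 0 < N.post t p) → ∃ p ∈ D, 0 < N.pre p t

/-- `D` is deadlocked at `M`: every place of `D` marks below each of its output weights. -/
def deadlockedAt (N : PetriNet P T) (D : Set P) (M : P → ℕ) : Prop :=
  ∀ p ∈ D, ∀ t, 0 < N.pre p t → M p < N.pre p t

def reversible (N : PetriNet P T) (M0 : P → ℕ) : Prop :=
  ∀ M, N.reach M0 M → N.reach M M0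

def deadlockable (N : PetriNet P T) (M0 : P → ℕ) : Prop :=
  ∃ M, N.reach M0 M ∧ ∀ t, ¬ N.enabled M t

def bounded (N : PetriNet P T) (M0 : P → ℕ) : Prop :=
  ∃ k, ∀ M, N.reach M0 M → ∀ p, M p ≤ k

def structBounded (N : PetriNet P T) : Prop :=
  ∀ M0 : P → ℕ, N.bounded M0

/-- All output weights of each place are equal. -/
def homogeneous (N : PetriNet P T) : Prop :=
  ∀ p t t', 0 < N.pre p t → 0 < N.pre p t' → N.pre p t = N.pre p t'

/-- A place with at least two output transitions. -/
def sharedPlace (N : PetriNet P T) (p : P) : Prop :=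
  ∃ t t', t ≠ t' ∧ 0 < N.pre p t ∧ 0 < N.pre p t'

/-- Homogeneous net with at most one shared place. -/
def H1S (N : PetriNet P T) : Prop :=
  N.homogeneous ∧ ∀ p q, N.sharedPlace p → N.sharedPlace q → p = q

/-- H1S net such that deleting the shared place (if any) yields a WMG≤ :
every non-shared place has at most one input and at most one output transition. -/
def H1S_WMGle (N : PetriNet P T) : Prop :=
  N.H1S ∧ ∀ p, ¬ N.sharedPlace p →
    (∀ t t', 0 < N.post t p → 0 < N.post t' p → t = t') ∧
    (∀ t t', 0 < N.pre p t → 0 < N.pre p t' → t = t')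

end PetriNet

namespace PetriNet

/-- Residue of a sequence with respect to a T-vector `Y`: for each transition `t`,
remove the `min(count, Y t)` leftmost occurrences of `t`. -/
def residueVec {T : Type} [DecidableEq T] : List T → (T → ℕ) → List T
  | [], _ => []
  | t :: σ, Y =>
    if 0 < Y t then residueVec σ (Function.update Y t (Y t - 1))
    else t :: residueVec σ Y

end PetriNet
namespace PetriNet

variable {P T : Type}

theorem feasible_append' (N : PetriNet P T) (a b : List T) (M : P → ℕ) :
    N.feasible M (a ++ b) ↔ N.feasible M a ∧ N.feasible (N.fireSeq M a) b := by
  induction a generalizing M with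
  | nil => simp [feasible, fireSeq]
  | cons t a ih => simp [feasible, fireSeq, ih, and_assoc]

theorem fireSeq_append' (N : PetriNet P T) (a b : List T) (M : P → ℕ) :
    N.fireSeq M (a ++ b) = N.fireSeq (N.fireSeq M a) b := by
  induction a generalizing M with
  | nil => rfl
  | cons t a ih => simp [fireSeq, ih]

theorem reach_trans' (N : PetriNet P T) {M1 M2 M3 : P → ℕ}
    (h : N.reach M1 M2) (h' : N.reach M2 M3) : N.reach M1 M3 := by
  obtain ⟨a, ha, ha'⟩ := h; obtain ⟨b, hb, hb'⟩ := h'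
  exact ⟨a ++ b, by rw [feasible_append']; exact ⟨ha, ha' ▸ hb⟩,
    by rw [fireSeq_append', ha']; exact hb'⟩

theorem live_of_reach' (N : PetriNet P T) {M0 M1 : P → ℕ}
    (h : N.live M0) (hr : N.reach M0 M1) : N.live M1 :=
  fun M hM t => h M (N.reach_trans' hr hM) t

theorem fire_int' (N : PetriNet P T) {M : P → ℕ} {t : T} (h : N.enabled M t) (p : P) :
    (N.fire M t p : ℤ) = M p + N.incidence p t := by
  have := h p
  unfold fire incidence
  push_cast [this]
  ring

theorem fireSeq_int' [Fintype T] [DecidableEq T] (N : PetriNet P T) :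
    ∀ (σ : List T) (M : P → ℕ), N.feasible M σ → ∀ p,
      (N.fireSeq M σ p : ℤ) = M p + ∑ s, N.incidence p s * (σ.count s : ℤ) := by
  intro σ
  induction σ with
  | nil => intro M _ p; simp [fireSeq]
  | cons t σ ih =>
    intro M hf p
    obtain ⟨hen, hf'⟩ := hf
    have h1 : (N.fireSeq (N.fire M t) σ p : ℤ)
        = N.fire M t p + ∑ s, N.incidence p s * (σ.count s : ℤ) := ih (N.fire M t) hf' p
    show (N.fireSeq (N.fire M t) σ p : ℤ) = _
    rw [h1, N.fire_int' hen p]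
    have h2 : ∀ s : T, (((t :: σ).count s : ℤ)) = (σ.count s : ℤ) + (if s = t then 1 else 0) := by
      intro s
      by_cases hs : s = t <;> simp [List.count_cons, hs] <;> exact Ne.symm hs
    simp only [h2, mul_add, Finset.sum_add_distrib, mul_ite, mul_one, mul_zero,
      Finset.sum_ite_eq', Finset.mem_univ, if_true]
    ring

theorem residueVec_append_zero [DecidableEq T] (τ σ : List T) (Y : T → ℕ)
    (h : ∀ u ∈ τ, Y u = 0) :
    residueVec (τ ++ σ) Y = τ ++ residueVec σ Y := by
  induction τ with
  | nil => rfl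
  | cons u τ ih =>
    have hu : Y u = 0 := h u List.mem_cons_self
    simp [residueVec, hu, ih (fun x hx => h x (List.mem_cons_of_mem u hx))]

theorem sum_update_mul' [Fintype T] [DecidableEq T] (I : T → ℤ) (Y : T → ℕ) (t : T)
    (h : 0 < Y t) :
    ∑ s, I s * ((Function.update Y t (Y t - 1)) s : ℤ) = (∑ s, I s * (Y s : ℤ)) - I t := by
  have key : ∀ s, I s * ((Function.update Y t (Y t - 1)) s : ℤ)
      = I s * (Y s : ℤ) + (if s = t then -(I t) else 0) := by
    intro s
    by_cases hs : s = t
    · subst hs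
      have : ((Y s - 1 : ℕ) : ℤ) = (Y s : ℤ) - 1 := by
        have : 1 ≤ Y s := h
        push_cast [this]; ring
      simp [Function.update, this]; ring
    · simp [Function.update, hs]
  simp only [key, Finset.sum_add_distrib, Finset.sum_ite_eq', Finset.mem_univ, if_true]
  ring

end PetriNet
namespace PetriNet

variable {P T : Type}

/-- KEY: if no `Y`-positive transition is enabled at `M0`, any transition enabled
at `M0` is also enabled at `M = M0 + I·Y`. -/
theorem key' [Fintype T] (N : PetriNet P T) (M0 M : P → ℕ) (Y : T → ℕ)
    (hclass : N.H1S_WMGle) (hlive : N.live M0)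
    (hstate : ∀ p, (M p : ℤ) = M0 p + ∑ t, N.incidence p t * (Y t : ℤ))
    (hnoY : ∀ t, 0 < Y t → ¬ N.enabled M0 t)
    {u : T} (hu : N.enabled M0 u) : N.enabled M u := by
  intro p
  by_contra hlt
  push_neg at hlt
  have hM0p : N.pre p u ≤ M0 p := hu p
  have hpu : 0 < N.pre p u := lt_of_le_of_lt (Nat.zero_le _) hlt
  have hSneg : ∑ t, N.incidence p t * (Y t : ℤ) < 0 := by
    have h1 : (M p : ℤ) < (M0 p : ℤ) := by exact_mod_cast lt_of_lt_of_le hlt hM0p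
    linarith [hstate p]
  obtain ⟨v, -, hv⟩ : ∃ v ∈ Finset.univ, N.incidence p v * (Y v : ℤ) < 0 := by
    by_contra hc
    push_neg at hc
    exact absurd (Finset.sum_nonneg fun i hi => hc i hi) (not_le.mpr hSneg)
  have hYv : 0 < Y v := by
    rcases Nat.eq_zero_or_pos (Y v) with h | h
    · simp [h] at hv
    · exact h
  have hIv : N.incidence p v < 0 := by
    by_contra hc
    push_neg at hc
    exact absurd (mul_nonneg hc (Nat.cast_nonneg _)) (not_le.mpr hv)
  have hprev : 0 < N.pre p v := by
    have h1 : (N.post v p : ℤ) - (N.pre p v : ℤ) < 0 := hIv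
    have h3 : (0:ℤ) ≤ (N.post v p : ℤ) := Nat.cast_nonneg _
    have h2 : (0:ℤ) < (N.pre p v : ℤ) := by linarith
    exact_mod_cast h2
  have hvu : v ≠ u := by
    intro h
    exact hnoY v hYv (h ▸ hu)
  have hpshared : N.sharedPlace p := ⟨v, u, hvu, hprev, hpu⟩
  -- for every Y-positive x there is a blocking non-shared place q with a
  -- Y-positive producer c
  have hw : ∀ x, 0 < Y x → ∃ q c, 0 < N.pre q x ∧ M0 q < N.pre q x ∧
      (∀ s, 0 < N.pre q s → s = x) ∧ 0 < N.post c q ∧ 0 < Y c ∧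
      (∀ s, 0 < N.post s q → s = c) := by
    intro x hx
    have hne := hnoY x hx
    unfold enabled at hne
    push_neg at hne
    obtain ⟨q, hq⟩ := hne
    have hq2 : M0 q < N.pre q x := hq
    have hq1 : 0 < N.pre q x := lt_of_le_of_lt (Nat.zero_le _) hq2
    have hqns : ¬ N.sharedPlace q := by
      intro hs
      have hqp : q = p := hclass.1.2 q p hs hpshared
      subst hqp
      have : N.pre q x = N.pre q u := hclass.1.1 q x u hq1 hpu
      omega
    have hout : ∀ s, 0 < N.pre q s → s = x :=
      fun s hs => (hclass.2 q hqns).2 s x hs hq1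
    -- production into q must be Y-positive
    have h0 : (0:ℤ) ≤ (M q : ℤ) := Nat.cast_nonneg _
    have hsq := hstate q
    have hsplit : ∑ s, N.incidence q s * (Y s : ℤ)
        = (∑ s, (N.post s q : ℤ) * (Y s : ℤ)) - ∑ s, (N.pre q s : ℤ) * (Y s : ℤ) := by
      rw [← Finset.sum_sub_distrib]
      apply Finset.sum_congr rfl
      intro s _
      unfold incidence
      ring
    have hsingle : (N.pre q x : ℤ) * (Y x : ℤ) ≤ ∑ s, (N.pre q s : ℤ) * (Y s : ℤ) :=
      Finset.single_le_sum (f := fun s => (N.pre q s : ℤ) * (Y s : ℤ))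
        (fun i _ => mul_nonneg (Nat.cast_nonneg _) (Nat.cast_nonneg _)) (Finset.mem_univ x)
    have hYx1 : (1:ℤ) ≤ (Y x : ℤ) := by exact_mod_cast hx
    have hqx1 : (1:ℤ) ≤ (N.pre q x : ℤ) := by exact_mod_cast hq1
    have hM0q : (M0 q : ℤ) < (N.pre q x : ℤ) := by exact_mod_cast hq2
    have hpos : 0 < ∑ s, (N.post s q : ℤ) * (Y s : ℤ) := by
      have h3 : (N.pre q x : ℤ) ≤ (N.pre q x : ℤ) * (Y x : ℤ) := le_mul_of_one_le_right (by linarith) hYx1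
      nlinarith [hsq, h0]
    obtain ⟨c, -, hc⟩ : ∃ c ∈ Finset.univ, 0 < (N.post c q : ℤ) * (Y c : ℤ) := by
      by_contra hcc
      push_neg at hcc
      exact absurd (Finset.sum_nonpos fun i hi => hcc i hi) (not_le.mpr hpos)
    have hcpost : 0 < N.post c q := by
      rcases Nat.eq_zero_or_pos (N.post c q) with h | h
      · simp [h] at hc
      · exact h
    have hcY : 0 < Y c := by
      rcases Nat.eq_zero_or_pos (Y c) with h | h
      · simp [h] at hc
      · exact h
    have hin : ∀ s, 0 < N.post s q → s = c :=
      fun s hs => (hclass.2 q hqns).1 s c hs hcpost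
    exact ⟨q, c, hq1, hq2, hout, hcpost, hcY, hin⟩
  -- make total choice functions
  have hw' : ∀ x, ∃ q c, 0 < Y x → (0 < N.pre q x ∧ M0 q < N.pre q x ∧
      (∀ s, 0 < N.pre q s → s = x) ∧ 0 < N.post c q ∧ 0 < Y c ∧
      (∀ s, 0 < N.post s q → s = c)) := by
    intro x
    by_cases hx : 0 < Y x
    · obtain ⟨q, c, h1, h2, h3, h4, h5, h6⟩ := hw x hx
      exact ⟨q, c, fun _ => ⟨h1, h2, h3, h4, h5, h6⟩⟩
    · exact ⟨p, u, fun h => absurd h hx⟩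
  choose q c hprops using hw'
  -- siphon invariant
  have SIP : ∀ (σ : List T) (M1 : P → ℕ), N.feasible M1 σ →
      (∀ x, 0 < Y x → M1 (q x) < N.pre (q x) x) →
      ∀ x, 0 < Y x → N.fireSeq M1 σ (q x) < N.pre (q x) x := by
    intro σ
    induction σ with
    | nil => intro M1 _ hinv; exact hinv
    | cons s σ' ih =>
      intro M1 hf hinv
      obtain ⟨hen, hf'⟩ := hf
      have hYs : ¬ 0 < Y s := by
        intro hs
        have h1 := (hprops s hs).1
        have := hen (q s)
        have := hinv s hs
        omega
      apply ih (N.fire M1 s) hf'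
      intro x hx
      obtain ⟨p1, p2, p3, p4, p5, p6⟩ := hprops x hx
      have h1 : N.pre (q x) s = 0 := by
        by_contra hc
        exact hYs (p3 s (Nat.pos_of_ne_zero hc) ▸ hx)
      have h2 : N.post s (q x) = 0 := by
        by_contra hc
        exact hYs ((p6 s (Nat.pos_of_ne_zero hc)).symm ▸ p5)
      show N.fire M1 s (q x) < _
      unfold fire
      rw [h1, h2]
      simpa using hinv x hx
  -- contradiction with liveness for v
  obtain ⟨Mst, hreach, henv⟩ := hlive M0 ⟨[], trivial, rfl⟩ v
  obtain ⟨σv, hfv, hMv⟩ := hreach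
  have hfin := SIP σv M0 hfv (fun x hx => (hprops x hx).2.1) v hYv
  rw [hMv] at hfin
  exact absurd (henv (q v)) (not_le.mpr hfin)

end PetriNet
namespace PetriNet

variable {P T : Type}

theorem claimC' [Fintype T] (N : PetriNet P T) (Y : T → ℕ) (hclass : N.H1S_WMGle) :
    ∀ (ρ : List T) (M0 M : P → ℕ), N.live M0 →
      (∀ p, (M p : ℤ) = M0 p + ∑ t, N.incidence p t * (Y t : ℤ)) →
      N.feasible M0 ρ → (∃ t, 0 < Y t ∧ N.enabled (N.fireSeq M0 ρ) t) →
      ∃ τ t, 0 < Y t ∧ (∀ x ∈ τ, Y x = 0) ∧ N.feasible M0 τ ∧ N.feasible M τ ∧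
        (∀ p, (N.fireSeq M τ p : ℤ)
            = N.fireSeq M0 τ p + ∑ s, N.incidence p s * (Y s : ℤ)) ∧
        N.enabled (N.fireSeq M0 τ) t := by
  intro ρ
  induction ρ with
  | nil =>
    intro M0 M hlive hstate _ hex
    obtain ⟨t, ht, hen⟩ := hex
    exact ⟨[], t, ht, by simp, trivial, trivial, hstate, hen⟩
  | cons u ρ' ih =>
    intro M0 M hlive hstate hf hex
    by_cases hY0 : ∃ t, 0 < Y t ∧ N.enabled M0 t
    · obtain ⟨t, ht, hen⟩ := hY0
      exact ⟨[], t, ht, by simp, trivial, trivial, hstate, hen⟩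
    · push_neg at hY0
      obtain ⟨hu, hf'⟩ := hf
      have hY0' : ∀ t, 0 < Y t → ¬ N.enabled M0 t := fun t ht hen => hY0 t ht hen
      have huM : N.enabled M u := N.key' M0 M Y hclass hlive hstate hY0' hu
      have hYu : Y u = 0 := by
        by_contra h
        exact hY0' u (Nat.pos_of_ne_zero h) hu
      have hstate' : ∀ p, (N.fire M u p : ℤ)
          = N.fire M0 u p + ∑ s, N.incidence p s * (Y s : ℤ) := by
        intro p
        rw [N.fire_int' huM p, N.fire_int' hu p, hstate p]
        ring
      have hlive' : N.live (N.fire M0 u) :=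
        N.live_of_reach' hlive ⟨[u], ⟨hu, trivial⟩, rfl⟩
      obtain ⟨τ', t, h1, h2, h3, h4, h5, h6⟩ :=
        ih (N.fire M0 u) (N.fire M u) hlive' hstate' hf' hex
      refine ⟨u :: τ', t, h1, ?_, ⟨hu, h3⟩, ⟨huM, h4⟩, h5, h6⟩
      intro x hx
      rcases List.mem_cons.mp hx with h | h
      · exact h ▸ hYu
      · exact h2 x h

theorem main' [Fintype T] [DecidableEq T] (N : PetriNet P T) (hclass : N.H1S_WMGle) :
    ∀ (n : ℕ) (Y : T → ℕ), (∑ t, Y t) = n → ∀ (M0 M : P → ℕ), N.live M0 →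
      (∀ p, (M p : ℤ) = M0 p + ∑ t, N.incidence p t * (Y t : ℤ)) →
      ∃ σ, N.feasible M0 σ ∧ (∀ t, Y t ≤ σ.count t) ∧
        N.feasible M (residueVec σ Y) ∧
        N.fireSeq M (residueVec σ Y) = N.fireSeq M0 σ := by
  intro n
  induction n with
  | zero =>
    intro Y hsum M0 M hlive hstate
    have hY : ∀ t, Y t = 0 := by
      intro t
      exact (Finset.sum_eq_zero_iff.mp hsum) t (Finset.mem_univ t)
    have hM : M = M0 := by
      funext p
      have := hstate p
      simp [hY] at this
      exact_mod_cast this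
    exact ⟨[], trivial, fun t => by simp [hY], trivial, hM⟩
  | succ n ihn =>
    intro Y hsum M0 M hlive hstate
    obtain ⟨t0, ht0⟩ : ∃ t, 0 < Y t := by
      by_contra h
      push_neg at h
      have : ∑ t, Y t = 0 := Finset.sum_eq_zero fun t _ => Nat.le_zero.mp (h t)
      omega
    obtain ⟨Mst, hr, hent⟩ := hlive M0 ⟨[], trivial, rfl⟩ t0
    obtain ⟨ρ, hρf, hρe⟩ := hr
    obtain ⟨τ, t, hYt, hτY, hτM0, hτM, hτstate, hten⟩ :=
      N.claimC' Y hclass ρ M0 M hlive hstate hρf ⟨t0, ht0, hρe ▸ hent⟩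
    set Y' := Function.update Y t (Y t - 1) with hY'def
    have hsum' : ∑ s, Y' s = n := by
      have h1 : ∑ s, Y' s = (Y t - 1) + ∑ s ∈ Finset.univ \ {t}, Y s :=
        Finset.sum_update_of_mem (Finset.mem_univ t) Y (Y t - 1)
      have h2 : ∑ s, Y s = Y t + ∑ s ∈ Finset.univ \ {t}, Y s :=
        Finset.sum_eq_add_sum_sdiff_singleton_of_mem (Finset.mem_univ t) Y
      omega
    have hstate' : ∀ p, ((N.fireSeq M τ) p : ℤ)
        = N.fire (N.fireSeq M0 τ) t p + ∑ s, N.incidence p s * (Y' s : ℤ) := by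
      intro p
      rw [N.fire_int' hten p,
        sum_update_mul' (fun s => N.incidence p s) Y t hYt, hτstate p]
      ring
    have hlive' : N.live (N.fire (N.fireSeq M0 τ) t) := by
      apply N.live_of_reach' hlive
      refine ⟨τ ++ [t], ?_, ?_⟩
      · rw [feasible_append']
        exact ⟨hτM0, hten, trivial⟩
      · rw [fireSeq_append']
        rfl
    obtain ⟨σ', hσf, hσc, hσrf, hσre⟩ :=
      ihn Y' hsum' (N.fire (N.fireSeq M0 τ) t) (N.fireSeq M τ) hlive' hstate'
    have hres : residueVec (τ ++ t :: σ') Y = τ ++ residueVec σ' Y' := by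
      rw [residueVec_append_zero τ (t :: σ') Y hτY]
      simp [residueVec, hYt, hY'def]
    refine ⟨τ ++ t :: σ', ?_, ?_, ?_, ?_⟩
    · rw [feasible_append']
      exact ⟨hτM0, hten, hσf⟩
    · intro s
      have hcnt : (τ ++ t :: σ').count s = τ.count s + ((σ').count s + if s = t then 1 else 0) := by
        by_cases hs : s = t <;> simp [List.count_append, List.count_cons, hs] <;> exact Ne.symm hs
      have h9 := hσc s
      rw [hcnt]
      by_cases hs : s = t
      · rw [if_pos hs]
        have hYs' : Y' s = Y s - 1 := by rw [hY'def, hs]; simp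
        have h8 : 0 < Y s := by rw [hs]; exact hYt
        omega
      · rw [if_neg hs]
        have hYs' : Y' s = Y s := by rw [hY'def]; exact Function.update_of_ne hs _ _
        omega
    · rw [hres, feasible_append']
      exact ⟨hτM, hσrf⟩
    · rw [hres, fireSeq_append', fireSeq_append', hσre]
      rfl

end PetriNet

/-- in a live H1S-WMG≤ system, for every solution `(M, Y)` of the state
equation there is a feasible sequence `σ` from `M0` with Parikh vector at least `Y`,
leading to a marking `M'` that is also reached from `M` by firing `σ ∖ Y`;
consequently `(N, M)` is live. -/
theorem stmt6 {P T : Type} [Fintype T] [DecidableEq T] (N : PetriNet P T)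
    (M0 : P → ℕ) (hclass : N.H1S_WMGle) (hlive : N.live M0)
    (Y : T → ℕ) (M : P → ℕ)
    (hstate : ∀ p, (M p : ℤ) = (M0 p : ℤ) + ∑ t, N.incidence p t * (Y t : ℤ)) :
    (∃ (M' : P → ℕ) (σ : List T),
      N.feasible M0 σ ∧ N.fireSeq M0 σ = M' ∧
      (∀ t, Y t ≤ σ.count t) ∧
      N.feasible M (PetriNet.residueVec σ Y) ∧
      N.fireSeq M (PetriNet.residueVec σ Y) = M') ∧
    N.live M := by
  obtain ⟨σ, h1, h2, h3, h4⟩ :=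
    N.main' hclass (∑ t, Y t) Y rfl M0 M hlive hstate
  refine ⟨⟨N.fireSeq M0 σ, σ, h1, rfl, h2, h3, h4⟩, ?_⟩
  intro M2 hr2 t
  obtain ⟨τ2, hτf, hτe⟩ := hr2
  set Y2 : T → ℕ := fun s => Y s + τ2.count s with hY2
  have hstate2 : ∀ p, ((M2 p : ℤ) = M0 p + ∑ s, N.incidence p s * (Y2 s : ℤ)) := by
    intro p
    have h5 := N.fireSeq_int' τ2 M hτf p
    rw [hτe] at h5
    rw [h5, hstate p]
    have h6 : ∀ s, N.incidence p s * (Y2 s : ℤ)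
        = N.incidence p s * (Y s : ℤ) + N.incidence p s * (τ2.count s : ℤ) := by
      intro s
      rw [hY2]
      push_cast
      ring
    simp only [h6, Finset.sum_add_distrib]
    ring
  obtain ⟨σ2, g1, g2, g3, g4⟩ :=
    N.main' hclass (∑ s, Y2 s) Y2 rfl M0 M2 hlive hstate2
  have hr2' : N.reach M2 (N.fireSeq M0 σ2) := ⟨PetriNet.residueVec σ2 Y2, g3, g4⟩
  have hr0 : N.reach M0 (N.fireSeq M0 σ2) := ⟨σ2, g1, rfl⟩
  obtain ⟨M3, hr3, hen3⟩ := hlive _ hr0 t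
  exact ⟨M3, N.reach_trans' hr2' hr3, hen3⟩
end

section
/- Let S = (N, M₀) be a strongly connected H1S-WMG≤ system such that the net obtained by removing the shared place (if any) is also strongly connected, with incidence matrix I. Then S is live if and only if there is no solution (M, Y) with M ∈ ℕ^P, Y ∈ ℕ^T, of the state equation M = M₀ + I·Y such that M is a dead marking (no transition is enabled at M). -/
open Classical

namespace PetriNet

/-- The underlying bipartite directed graph of a net. -/
def netEdge {P T : Type} (N : PetriNet P T) : (P ⊕ T) → (P ⊕ T) → Prop
  | Sum.inl p, Sum.inr t => 0 < N.pre p t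
  | Sum.inr t, Sum.inl p => 0 < N.post t p
  | _, _ => False

def stronglyConnected {P T : Type} (N : PetriNet P T) : Prop :=
  ∀ a b : P ⊕ T, Relation.ReflTransGen N.netEdge a b

/-- Nodes remaining after deleting the shared place(s). -/
def notShared {P T : Type} (N : PetriNet P T) : (P ⊕ T) → Prop
  | Sum.inl p => ¬ N.sharedPlace p
  | Sum.inr _ => True

/-- Strong connectedness of the net obtained by removing the shared place(s). -/
def sconnWithoutShared {P T : Type} (N : PetriNet P T) : Prop :=
  ∀ a b : P ⊕ T, N.notShared a → N.notShared b →
    Relation.ReflTransGen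
      (fun x y => N.netEdge x y ∧ N.notShared x ∧ N.notShared y) a b

end PetriNet

set_option linter.unusedSectionVars false

section Aux
open PetriNet
variable {P T : Type} (N : PetriNet P T)

lemma feasible_append {M : P → ℕ} {σ σ' : List T} :
    N.feasible M (σ ++ σ') ↔ N.feasible M σ ∧ N.feasible (N.fireSeq M σ) σ' := by
  induction σ generalizing M with
  | nil => simp [PetriNet.feasible, PetriNet.fireSeq]
  | cons t σ ih =>
      simp only [List.cons_append, List.append_eq, PetriNet.feasible, PetriNet.fireSeq, ih, and_assoc]

lemma fireSeq_append (M : P → ℕ) (σ σ' : List T) :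
    N.fireSeq M (σ ++ σ') = N.fireSeq (N.fireSeq M σ) σ' := by
  induction σ generalizing M with
  | nil => simp [PetriNet.fireSeq]
  | cons t σ ih => simp [PetriNet.fireSeq, ih]

lemma reach_trans {M0 M1 M2 : P → ℕ} (h1 : N.reach M0 M1) (h2 : N.reach M1 M2) :
    N.reach M0 M2 := by
  obtain ⟨σ, hf, he⟩ := h1
  obtain ⟨σ', hf', he'⟩ := h2
  exact ⟨σ ++ σ', by rw [feasible_append]; exact ⟨hf, he ▸ hf'⟩,
    by rw [fireSeq_append, he, he']⟩

lemma reach_refl (M : P → ℕ) : N.reach M M := ⟨[], trivial, rfl⟩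

lemma reach_fire {M M1 : P → ℕ} {t : T} (h : N.reach M M1) (ht : N.enabled M1 t) :
    N.reach M (N.fire M1 t) :=
  reach_trans N h ⟨[t], ⟨ht, trivial⟩, rfl⟩

lemma fire_cast {M : P → ℕ} {t : T} (ht : N.enabled M t) (p : P) :
    (N.fire M t p : ℤ) = (M p : ℤ) + N.incidence p t := by
  have := ht p
  simp only [PetriNet.fire, PetriNet.incidence]
  push_cast [this]
  ring

lemma stateEq_list [Fintype T] {M : P → ℕ} {σ : List T} (hf : N.feasible M σ) (p : P) :
    (N.fireSeq M σ p : ℤ) = (M p : ℤ) + ∑ t, N.incidence p t * (σ.count t : ℤ) := by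
  induction σ generalizing M with
  | nil => simp [PetriNet.fireSeq]
  | cons t σ ih =>
      obtain ⟨ht, hf⟩ := hf
      simp only [PetriNet.fireSeq]
      rw [ih hf, fire_cast N ht]
      have hc : ∀ τ : T, ((t :: σ).count τ : ℤ) = (σ.count τ : ℤ) + if τ = t then 1 else 0 := by
        intro τ
        by_cases h : τ = t
        · subst h; rw [List.count_cons_self]; push_cast; simp
        · rw [List.count_cons_of_ne (Ne.symm h)]; simp [h]
      have : ∑ τ, N.incidence p τ * ((t :: σ).count τ : ℤ)
          = (∑ τ, N.incidence p τ * (σ.count τ : ℤ)) + N.incidence p t := by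
        simp only [hc, mul_add, Finset.sum_add_distrib, mul_ite, mul_one, mul_zero]
        rw [Finset.sum_ite_eq' Finset.univ t (fun τ => N.incidence p τ)]
        simp
      rw [this]
      ring

lemma reach_potReach [Fintype T] {M0 M : P → ℕ} (h : N.reach M0 M) : N.potReach M0 M := by
  obtain ⟨σ, hf, he⟩ := h
  exact ⟨fun t => σ.count t, fun p => by rw [← he, stateEq_list N hf p]⟩

lemma dead_reach_eq {M M' : P → ℕ} (hd : ∀ t, ¬ N.enabled M t) (h : N.reach M M') :
    M' = M := by
  obtain ⟨σ, hf, he⟩ := h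
  cases σ with
  | nil => exact he.symm ▸ rfl
  | cons t σ => exact absurd hf.1 (hd t)

lemma live_no_dead {M0 M1 : P → ℕ} [Nonempty T] (hl : N.live M0) (hr : N.reach M0 M1)
    (hd : ∀ t, ¬ N.enabled M1 t) : False := by
  obtain ⟨M', hr', he'⟩ := hl M1 hr (Classical.arbitrary T)
  exact hd _ (dead_reach_eq N hd hr' ▸ he')

lemma exists_boundary {α : Type*} {R : α → α → Prop} {H : α → Prop} :
    ∀ {x y : α}, Relation.ReflTransGen R x y → H x → ¬ H y →
      ∃ c d, R c d ∧ H c ∧ ¬ H d := by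
  intro x y hxy
  induction hxy using Relation.ReflTransGen.head_induction_on with
  | refl => intro h h'; exact absurd h h'
  | @head a c hR hrest ih =>
      intro hx hy
      by_cases hz : H c
      · exact ih hz hy
      · exact ⟨_, _, hR, hx, hz⟩

end Aux

section Fwd
open PetriNet
variable {P T : Type} [Fintype T] [Nonempty T] (N : PetriNet P T)

lemma incidence_split (q : P) (Y : T → ℕ) :
    ∑ τ, N.incidence q τ * (Y τ : ℤ)
      = (∑ τ, (N.post τ q : ℤ) * Y τ) - ∑ τ, (N.pre q τ : ℤ) * Y τ := by
  rw [← Finset.sum_sub_distrib]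
  refine Finset.sum_congr rfl fun τ _ => ?_
  simp only [PetriNet.incidence]; ring

lemma forward {M0 M : P → ℕ}
    (hclass : N.H1S_WMGle) (hlive : N.live M0)
    (hdead : ∀ t, ¬ N.enabled M t) :
    ∀ n (Y : T → ℕ) (M1 : P → ℕ), (∑ t, Y t) = n → N.reach M0 M1 →
      (∀ p, (M p : ℤ) = (M1 p : ℤ) + ∑ t, N.incidence p t * (Y t : ℤ)) → False := by
  intro n
  induction n using Nat.strong_induction_on with
  | _ n ih =>
  intro Y M1 hsum hreach hY
  by_cases hA : ∃ t, N.enabled M1 t ∧ 0 < Y t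
  · obtain ⟨t, ht, hYt⟩ := hA
    have hn : 0 < n := by
      rw [← hsum]
      exact Finset.sum_pos' (fun _ _ => Nat.zero_le _) ⟨t, Finset.mem_univ t, hYt⟩
    set Y' : T → ℕ := fun τ => Y τ - (if τ = t then 1 else 0) with hY'def
    have hcast : ∀ τ, ((Y' τ : ℤ)) = (Y τ : ℤ) - (if τ = t then 1 else 0) := by
      intro τ
      by_cases h : τ = t
      · subst h; simp [hY'def, Nat.cast_sub hYt]
      · simp [hY'def, h]
    have hsum' : ∑ τ, Y' τ = n - 1 := by
      have : ((∑ τ, Y' τ : ℕ) : ℤ) = ((n - 1 : ℕ) : ℤ) := by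
        push_cast [hcast, Nat.cast_sub (Nat.one_le_iff_ne_zero.mpr hn.ne')]
        rw [Finset.sum_sub_distrib]
        simp [Finset.sum_ite_eq', ← hsum]
      exact_mod_cast this
    refine ih (n-1) (by omega) Y' (N.fire M1 t) hsum' (reach_fire N hreach ht) ?_
    intro p
    have : ∑ τ, N.incidence p τ * (Y' τ : ℤ)
        = (∑ τ, N.incidence p τ * (Y τ : ℤ)) - N.incidence p t := by
      simp only [hcast, mul_sub, Finset.sum_sub_distrib, mul_ite, mul_one, mul_zero]
      rw [Finset.sum_ite_eq' Finset.univ t (fun τ => N.incidence p τ)]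
      simp
    rw [this, fire_cast N ht p, hY p]
    ring
  · push_neg at hA
    have hcase : ∀ t, N.enabled M1 t → Y t = 0 :=
      fun t h => Nat.le_zero.mp (hA t h)
    by_cases hn0 : n = 0
    · have hY0 : ∀ t, Y t = 0 := by
        intro t
        exact Finset.sum_eq_zero_iff.mp (hn0 ▸ hsum) t (Finset.mem_univ t)
      have hM : M = M1 := by
        funext p
        have := hY p
        simp [hY0] at this
        exact_mod_cast this
      exact live_no_dead N hlive hreach (hM ▸ hdead)
    · obtain ⟨t1, ht1⟩ : ∃ t, 0 < Y t := by
        by_contra h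
        push_neg at h
        exact hn0 (by rw [← hsum]; exact Finset.sum_eq_zero fun t _ => Nat.le_zero.mp (h t))
      by_cases hd1 : ∀ t, ¬ N.enabled M1 t
      · exact live_no_dead N hlive hreach hd1
      push_neg at hd1
      obtain ⟨e, he⟩ := hd1
      have hYe : Y e = 0 := hcase e he
      obtain ⟨s, hs⟩ : ∃ p, ¬ (N.pre p e ≤ M p) := not_forall.mp (hdead e)
      have hsle : M s < N.pre s e := not_le.mp hs
      have hw : 0 < N.pre s e := lt_of_le_of_lt (Nat.zero_le _) hsle
      have hshared : N.sharedPlace s := by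
        by_contra hns
        have huniq := (hclass.2 s hns).2
        have hpre0 : ∀ τ, τ ≠ e → N.pre s τ = 0 := by
          intro τ hτ
          by_contra h0
          exact hτ (huniq τ e (Nat.pos_of_ne_zero h0) hw)
        have hpre : ∑ τ, (N.pre s τ : ℤ) * Y τ = 0 := by
          refine Finset.sum_eq_zero fun τ _ => ?_
          by_cases h : τ = e
          · subst h; simp [hYe]
          · simp [hpre0 τ h]
        have hpost : 0 ≤ ∑ τ, (N.post τ s : ℤ) * Y τ :=
          Finset.sum_nonneg fun τ _ => mul_nonneg (Int.natCast_nonneg _) (Int.natCast_nonneg _)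
        have := hY s
        rw [incidence_split, hpre, sub_zero] at this
        have h1 : (M1 s : ℤ) ≤ (M s : ℤ) := by omega
        have h2 : (N.pre s e : ℤ) ≤ (M1 s : ℤ) := by exact_mod_cast he s
        have h3 : (M s : ℤ) < (N.pre s e : ℤ) := by exact_mod_cast hsle
        omega
      have hsmax : ∀ τ, 0 < N.pre s τ → N.pre s τ ≤ M1 s := by
        intro τ hτ
        rw [hclass.1.1 s τ e hτ hw]
        exact he s
      have hdis : ∀ t, 0 < Y t → ¬ N.enabled M1 t := by
        intro t h hen
        rw [hcase t hen] at h
        exact absurd h (lt_irrefl 0)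
      have hstep : ∀ t, 0 < Y t → ∃ u, 0 < Y u ∧ ∃ q,
          M1 q < N.pre q t ∧ 0 < N.pre q t ∧ 0 < N.post u q ∧
          (∀ τ, 0 < N.post τ q → τ = u) ∧ (∀ τ, 0 < N.pre q τ → τ = t) := by
        intro t h
        obtain ⟨q, hq⟩ := not_forall.mp (hdis t h)
        have h1 : M1 q < N.pre q t := not_le.mp hq
        have h2 : 0 < N.pre q t := lt_of_le_of_lt (Nat.zero_le _) h1
        have hqns : ¬ N.sharedPlace q := by
          intro hsh
          have hqs : q = s := hclass.1.2 q s hsh hshared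
          subst hqs
          exact absurd (hsmax t h2) (not_le.mpr h1)
        have hcons : ∀ τ, 0 < N.pre q τ → τ = t := fun τ hτ => (hclass.2 q hqns).2 τ t hτ h2
        have hpre : ∑ τ, (N.pre q τ : ℤ) * Y τ = (N.pre q t : ℤ) * Y t := by
          refine Finset.sum_eq_single t (fun τ _ hτ => ?_) (by simp)
          have : N.pre q τ = 0 := by
            by_contra h0
            exact hτ (hcons τ (Nat.pos_of_ne_zero h0))
          simp [this]
        have hkey := hY q
        rw [incidence_split, hpre] at hkey
        have hYt1 : (1 : ℤ) ≤ (Y t : ℤ) := by exact_mod_cast h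
        have hp1 : (N.pre q t : ℤ) ≤ (N.pre q t : ℤ) * Y t :=
          le_mul_of_one_le_right (Int.natCast_nonneg _) hYt1
        have hM0 : (0 : ℤ) ≤ (M q : ℤ) := Int.natCast_nonneg _
        have hM1q : (M1 q : ℤ) < (N.pre q t : ℤ) := by exact_mod_cast h1
        have hpos : 0 < ∑ τ, (N.post τ q : ℤ) * Y τ := by omega
        have hposN : (∑ τ, N.post τ q * Y τ) ≠ 0 := by
          intro h0
          rw [show (0:ℤ) = ((0:ℕ):ℤ) from rfl, ← h0] at hpos
          push_cast at hpos
          exact lt_irrefl _ hpos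
        obtain ⟨u, _, hu⟩ := Finset.exists_ne_zero_of_sum_ne_zero hposN
        have hu1 : 0 < N.post u q := Nat.pos_of_ne_zero (fun h0 => hu (by simp [h0]))
        have hu2 : 0 < Y u := Nat.pos_of_ne_zero (fun h0 => hu (by simp [h0]))
        exact ⟨u, hu2, q, h1, h2, hu1, fun τ hτ => (hclass.2 q hqns).1 τ u hτ hu1, hcons⟩
      -- choice functions
      let A := {z : T // 0 < Y z}
      let u : A → A := fun z => ⟨choose (hstep z.1 z.2), (choose_spec (hstep z.1 z.2)).1⟩
      let q : A → P := fun z => choose (choose_spec (hstep z.1 z.2)).2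
      have hq1 : ∀ z : A, M1 (q z) < N.pre (q z) z.1 :=
        fun z => (choose_spec (choose_spec (hstep z.1 z.2)).2).1
      have hq3 : ∀ z : A, 0 < N.post (u z).1 (q z) :=
        fun z => (choose_spec (choose_spec (hstep z.1 z.2)).2).2.2.1
      have hq4 : ∀ z : A, ∀ τ, 0 < N.post τ (q z) → τ = (u z).1 :=
        fun z => (choose_spec (choose_spec (hstep z.1 z.2)).2).2.2.2.1
      have hq5 : ∀ z : A, ∀ τ, 0 < N.pre (q z) τ → τ = z.1 :=
        fun z => (choose_spec (choose_spec (hstep z.1 z.2)).2).2.2.2.2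
      -- find a cycle
      obtain ⟨i, j, hij, hcyc⟩ :
          ∃ i j : ℕ, i ≠ j ∧ u^[i] ⟨t1, ht1⟩ = u^[j] ⟨t1, ht1⟩ :=
        Finite.exists_ne_map_eq_of_infinite _
      -- wlog i < j
      set b0 : A := u^[min i j] ⟨t1, ht1⟩ with hb0
      set InB : A → Prop := fun z => ∃ m, u^[m] b0 = z with hInB
      have hInB0 : InB b0 := ⟨0, rfl⟩
      have hInBu : ∀ z, InB z → InB (u z) := by
        rintro z ⟨m, hm⟩
        exact ⟨m + 1, by rw [Function.iterate_succ_apply', hm]⟩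
      have frozen : ∀ (σ : List T) (M' : P → ℕ), N.feasible M' σ →
          (∀ z : A, InB z → M' (q z) = M1 (q z)) →
          (∀ z : A, InB z → N.fireSeq M' σ (q z) = M1 (q z)) := by
        intro σ
        induction σ with
        | nil => intro M' _ hM' z hz; exact hM' z hz
        | cons τ σ ih =>
            intro M' hf hM' z hz
            obtain ⟨hen, hf'⟩ := hf
            have hτB : ∀ z' : A, InB z' → z'.1 ≠ τ := by
              intro z' hz' hzτ
              have := hen (q z')
              rw [hM' z' hz'] at this
              rw [← hzτ] at this
              exact absurd this (not_le.mpr (hq1 z'))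
            have hfire : ∀ z' : A, InB z' → N.fire M' τ (q z') = M1 (q z') := by
              intro z' hz'
              have hpre0 : N.pre (q z') τ = 0 := by
                by_contra h0
                exact hτB z' hz' ((hq5 z' τ (Nat.pos_of_ne_zero h0)).symm)
              have hpost0 : N.post τ (q z') = 0 := by
                by_contra h0
                exact hτB (u z') (hInBu z' hz') ((hq4 z' τ (Nat.pos_of_ne_zero h0)).symm)
              simp [PetriNet.fire, hpre0, hpost0, hM' z' hz']
            exact ih (N.fire M' τ) hf' hfire z hz
      obtain ⟨M2, hr2, hen2⟩ := hlive M1 hreach b0.1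
      obtain ⟨σ, hfσ, heσ⟩ := hr2
      have := frozen σ M1 hfσ (fun _ _ => rfl) b0 hInB0
      rw [heσ] at this
      have := hen2 (q b0)
      rw [‹M2 (q b0) = M1 (q b0)›] at this
      exact absurd this (not_le.mpr (hq1 b0))

end Fwd

section Bwd
open PetriNet
variable {P T : Type} [Fintype T]

lemma incidence_split' (N : PetriNet P T) (q : P) (Y : T → ℤ) :
    ∑ τ, N.incidence q τ * Y τ
      = (∑ τ, (N.post τ q : ℤ) * Y τ) - ∑ τ, (N.pre q τ : ℤ) * Y τ := by
  rw [← Finset.sum_sub_distrib]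
  refine Finset.sum_congr rfl fun τ _ => ?_
  simp only [PetriNet.incidence]; ring

lemma starved_reaches_dead (N : PetriNet P T)
    (hclass : N.H1S_WMGle) (hsc' : N.sconnWithoutShared)
    {M1 : P → ℕ} {tS : T}
    (hstarve : ∀ M', N.reach M1 M' → ¬ N.enabled M' tS) :
    ∃ Md, N.reach M1 Md ∧ ∀ t, ¬ N.enabled Md t := by
  by_contra hcon
  push_neg at hcon
  -- infinite run
  let S := {M' : P → ℕ // N.reach M1 M'}
  let step : S → S := fun z =>
    ⟨N.fire z.1 (choose (hcon z.1 z.2)), reach_fire N z.2 (choose_spec (hcon z.1 z.2))⟩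
  let zs : ℕ → S := fun n => step^[n] ⟨M1, reach_refl N M1⟩
  let τs : ℕ → T := fun n => choose (hcon (zs n).1 (zs n).2)
  have hen : ∀ n, N.enabled (zs n).1 (τs n) := fun n => choose_spec (hcon (zs n).1 (zs n).2)
  have hfire : ∀ n, (zs (n+1)).1 = N.fire (zs n).1 (τs n) := by
    intro n
    show (step^[n+1] _).1 = _
    rw [Function.iterate_succ_apply']
  let cnt : T → ℕ → ℕ := fun τ n => ((Finset.range n).filter (fun i => τs i = τ)).card
  have hcnt_succ : ∀ τ n, cnt τ (n+1) = cnt τ n + (if τs n = τ then 1 else 0) := by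
    intro τ n
    show ((Finset.range (n+1)).filter _).card = _
    rw [Finset.range_add_one, Finset.filter_insert]
    by_cases h : τs n = τ
    · rw [if_pos h, if_pos h]
      rw [Finset.card_insert_of_notMem
        (fun hmem => absurd (Finset.mem_of_mem_filter _ hmem) (by simp))]
    · rw [if_neg h, if_neg h, add_zero]
  -- marking formula
  have hMf : ∀ n p, (((zs n).1 p : ℤ)) = (M1 p : ℤ) + ∑ τ, N.incidence p τ * (cnt τ n : ℤ) := by
    have hz0 : (zs 0).1 = M1 := rfl
    have hcnt0 : ∀ τ, cnt τ 0 = 0 := by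
      intro τ
      show ((Finset.range 0).filter _).card = 0
      rfl
    intro n
    induction n with
    | zero => intro p; simp [hcnt0, hz0]
    | succ n ihn =>
        intro p
        rw [hfire n, fire_cast N (hen n) p, ihn p]
        have : ∑ τ, N.incidence p τ * (cnt τ (n+1) : ℤ)
            = (∑ τ, N.incidence p τ * (cnt τ n : ℤ)) + N.incidence p (τs n) := by
          have hc : ∀ τ, ((cnt τ (n+1) : ℕ) : ℤ) = (cnt τ n : ℤ) + (if τ = τs n then 1 else 0) := by
            intro τ
            rw [hcnt_succ]
            by_cases h : τs n = τ
            · simp [h]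
            · have h2 : ¬ τ = τs n := fun h' => h h'.symm
              simp [h, h2]
          simp only [hc, mul_add, Finset.sum_add_distrib, mul_ite, mul_one, mul_zero]
          rw [Finset.sum_ite_eq' Finset.univ (τs n) (fun τ => N.incidence p τ)]
          simp
        rw [this]
        ring
  -- counts: bounded / unbounded
  have hbdd : ∀ τ (h : {i | τs i = τ}.Finite) n, cnt τ n ≤ h.toFinset.card := by
    intro τ h n
    apply Finset.card_le_card
    intro i hi
    simp only [Finset.mem_filter] at hi
    simp [h.mem_toFinset, hi.2]
  have hunbdd : ∀ τ, ¬ {i | τs i = τ}.Finite → ∀ B, ∃ n, B < cnt τ n := by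
    intro τ h B
    have hinf : {i | τs i = τ}.Infinite := h
    obtain ⟨t, hts, htc⟩ := hinf.exists_subset_card_eq (B+1)
    refine ⟨t.sup id + 1, ?_⟩
    have : t ⊆ (Finset.range (t.sup id + 1)).filter (fun i => τs i = τ) := by
      intro i hi
      simp only [Finset.mem_filter, Finset.mem_range]
      exact ⟨Nat.lt_succ_of_le (Finset.le_sup (f := id) hi), hts hi⟩
    have h2 := Finset.card_le_card this
    have hc : cnt τ (t.sup id + 1)
        = ((Finset.range (t.sup id + 1)).filter (fun i => τs i = τ)).card := rfl
    omega
  -- some transition fires infinitely often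
  obtain ⟨v, hv⟩ : ∃ v, ¬ {i | τs i = v}.Finite := by
    by_contra h
    push_neg at h
    have huniv : (Set.univ : Set ℕ) ⊆ ⋃ τ : T, {i | τs i = τ} := by
      intro i _
      exact Set.mem_iUnion.mpr ⟨τs i, rfl⟩
    exact Set.infinite_univ (Set.Finite.subset (Set.finite_iUnion h) huniv)
  -- tS never fires
  have hQtS : {i | τs i = tS}.Finite := by
    have : {i | τs i = tS} = ∅ := by
      ext i
      simp only [Set.mem_setOf_eq, Set.mem_empty_iff_false, iff_false]
      intro h
      exact hstarve (zs i).1 (zs i).2 (h ▸ hen i)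
    rw [this]; exact Set.finite_empty
  -- boundary
  set H : (P ⊕ T) → Prop := fun x =>
    match x with
    | Sum.inr τ => {i | τs i = τ}.Finite
    | Sum.inl p => ∀ τ, 0 < N.post τ p → {i | τs i = τ}.Finite
    with hH
  obtain ⟨c, d, ⟨hedge, hnsc, hnsd⟩, hHc, hHd⟩ :=
    exists_boundary (hsc' (Sum.inr tS) (Sum.inr v) trivial trivial) (x := Sum.inr tS)
      (H := H) hQtS hv
  match c, d with
  | Sum.inl p, Sum.inl p' => exact hedge.elim
  | Sum.inr a, Sum.inr a' => exact hedge.elim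
  | Sum.inr a, Sum.inl p =>
      -- a is the unique producer of p, Q a, but some producer not Q
      have hpost : 0 < N.post a p := hedge
      have hns : ¬ N.sharedPlace p := hnsd
      refine hHd ?_
      intro τ hτ
      rw [(hclass.2 p hns).1 τ a hτ hpost]
      exact hHc
  | Sum.inl p, Sum.inr b =>
      -- all producers of p have bounded counts; b consumes from p unboundedly
      have hpre : 0 < N.pre p b := hedge
      have hprod : ∀ τ, 0 < N.post τ p → {i | τs i = τ}.Finite := hHc
      set Bd : T → ℕ := fun τ => if h : {i | τs i = τ}.Finite then h.toFinset.card else 0 with hBd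
      have hcntBd : ∀ τ, 0 < N.post τ p → ∀ n, cnt τ n ≤ Bd τ := by
        intro τ hτ n
        have hfin := hprod τ hτ
        simp only [hBd, dif_pos hfin]
        exact hbdd τ hfin n
      set C : ℕ := ∑ τ, N.post τ p * Bd τ with hC
      obtain ⟨n, hn⟩ := hunbdd b hHd (M1 p + C)
      have hup : ∑ τ, (N.post τ p : ℤ) * (cnt τ n : ℤ) ≤ (C : ℤ) := by
        rw [hC]
        push_cast
        refine Finset.sum_le_sum fun τ _ => ?_
        by_cases h : 0 < N.post τ p
        · exact mul_le_mul_of_nonneg_left (by exact_mod_cast hcntBd τ h n) (Int.natCast_nonneg _)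
        · simp [Nat.eq_zero_of_not_pos h]
      have hlow : (N.pre p b : ℤ) * (cnt b n : ℤ) ≤ ∑ τ, (N.pre p τ : ℤ) * (cnt τ n : ℤ) := by
        refine Finset.single_le_sum (f := fun τ => (N.pre p τ : ℤ) * (cnt τ n : ℤ))
          (fun τ _ => mul_nonneg (Int.natCast_nonneg _) (Int.natCast_nonneg _)) (Finset.mem_univ b)
      have hlow2 : ((cnt b n : ℤ)) ≤ (N.pre p b : ℤ) * (cnt b n : ℤ) :=
        le_mul_of_one_le_left (Int.natCast_nonneg _) (by exact_mod_cast hpre)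
      have hMn := hMf n p
      rw [incidence_split' N p (fun τ => (cnt τ n : ℤ))] at hMn
      have h0 : (0 : ℤ) ≤ ((zs n).1 p : ℤ) := Int.natCast_nonneg _
      have hcast : (M1 p : ℤ) + (C : ℤ) < (cnt b n : ℤ) := by exact_mod_cast hn
      omega

lemma backward (N : PetriNet P T) {M0 : P → ℕ}
    (hclass : N.H1S_WMGle) (hsc' : N.sconnWithoutShared)
    (hnl : ¬ N.live M0) :
    ∃ M : P → ℕ, N.potReach M0 M ∧ ∀ t, ¬ N.enabled M t := by
  unfold PetriNet.live at hnl
  push_neg at hnl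
  obtain ⟨M1, hr1, tS, hstarve⟩ := hnl
  obtain ⟨Md, hrd, hd⟩ := starved_reaches_dead N hclass hsc' hstarve
  exact ⟨Md, reach_potReach N (reach_trans N hr1 hrd), hd⟩

end Bwd

/-- a strongly connected H1S-WMG≤ system whose shared-place removal
yields a strongly connected net is live iff no solution of the state equation is a
dead marking. -/
theorem stmt8 {P T : Type} [Fintype T] [Nonempty P] [Nonempty T]
    (N : PetriNet P T) (M0 : P → ℕ)
    (hclass : N.H1S_WMGle)
    (hsc : N.stronglyConnected)
    (hsc' : N.sconnWithoutShared) :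
    N.live M0 ↔
      ¬ ∃ M : P → ℕ, N.potReach M0 M ∧ ∀ t, ¬ N.enabled M t := by
  constructor
  · rintro hlive ⟨M, ⟨Y, hY⟩, hdead⟩
    exact forward N hclass hlive hdead (∑ t, Y t) Y M0 rfl (reach_refl N M0) hY
  · intro hno
    by_contra hnl
    exact hno (backward N hclass hsc' hnl)
end
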